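/- Let T ≥ 2 be an integer, let 1 ≤ s < r < e ≤ T be integers, and let f ∈ ℝ^T be continuous piecewise-linear on [s,e] with exactly one change-point (kink) at r, with kink magnitude Δ. Let n ≥ 3/2, δ > 0, f̲ > 0 and C* > 0 be reals with Δ ≥ f̲, δ^{3/2}·f̲ ≥ C*·√(log T), and min{r − s, e − r} ≥ δ/(2n). Let X ∈ ℝ^T satisfy |⟨X − f, ϕ^b_{s,e}⟩| ≤ √(8·log T) for every integer b with s < b < e. Then max over integers b with s < b < e of C^b_{s,e}(X) ≥ (1/(8·√(3n³)) − 2√2/C*)·δ^{3/2}·f̲. -/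

import Mathlib

set_option maxHeartbeats 1000000


open Real Finset

/-- Normalizing constant `α^b_{s,e}` of the linear contrast vector. -/
noncomputable def alphaC (s b e : ℕ) : ℝ :=
  Real.sqrt (6 / (((e : ℝ) - s + 1) * (((e : ℝ) - s + 1) ^ 2 - 1) *
    (1 + ((e : ℝ) - b + 1) * ((b : ℝ) - s + 1) + ((e : ℝ) - b) * ((b : ℝ) - s))))

/-- Normalizing constant `β^b_{s,e}` of the linear contrast vector. -/
noncomputable def betaC (s b e : ℕ) : ℝ :=
  Real.sqrt ((((e : ℝ) - b + 1) * ((e : ℝ) - b)) / (((b : ℝ) - s + 1) * ((b : ℝ) - s)))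

/-- The linear contrast vector `ϕ^b_{s,e}`, given coordinatewise as a function of `t`. -/
noncomputable def phiC (s b e t : ℕ) : ℝ :=
  if s ≤ t ∧ t ≤ b then
    alphaC s b e * betaC s b e *
      (((e : ℝ) + 2 * b - 3 * s + 2) * t - ((b : ℝ) * e + (b : ℝ) * s - 2 * (s : ℝ) ^ 2 + 2 * s))
  else if b + 1 ≤ t ∧ t ≤ e then
    -(alphaC s b e / betaC s b e) *
      ((3 * (e : ℝ) - 2 * b - s + 2) * t - (2 * (e : ℝ) ^ 2 + 2 * e - (b : ℝ) * e - (b : ℝ) * s))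
  else 0

/-- Euclidean inner product on `ℝ^T`, with coordinates indexed by `1, …, T`. -/
noncomputable def innerT (T : ℕ) (x y : ℕ → ℝ) : ℝ := ∑ t ∈ Finset.Icc 1 T, x t * y t

/-- The contrast value `C^b_{s,e}(x) = |⟨x, ϕ^b_{s,e}⟩|`. -/
noncomputable def contrastC (T s b e : ℕ) (x : ℕ → ℝ) : ℝ := |innerT T x (phiC s b e)|

lemma sum_range_quad (c₂ c₁ c₀ : ℝ) (N : ℕ) :
    ∑ t ∈ Finset.range N, (c₂*(t:ℝ)^2 + c₁*(t:ℝ) + c₀)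
      = c₂*((N:ℝ)*(N-1)*(2*N-1)/6) + c₁*((N:ℝ)*(N-1)/2) + c₀*N := by
  induction N with
  | zero => simp
  | succ n ih =>
    rw [Finset.sum_range_succ, ih]
    push_cast
    ring

lemma sum_affine_mul (a b : ℕ) (h : a ≤ b) (u v G A B : ℝ) :
    ∑ t ∈ Finset.Icc a b, (u + v*(t:ℝ)) * (G*(A*(t:ℝ) - B))
      = (G*v*A)*(((b:ℝ)+1)*(b:ℝ)*(2*(b:ℝ)+1)/6 - (a:ℝ)*((a:ℝ)-1)*(2*(a:ℝ)-1)/6)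
        + (G*(u*A - v*B))*(((b:ℝ)+1)*(b:ℝ)/2 - (a:ℝ)*((a:ℝ)-1)/2)
        + (-(G*u*B))*((b:ℝ)-(a:ℝ)+1) := by
  have h2 : a ≤ b + 1 := by omega
  rw [← Finset.Ico_add_one_right_eq_Icc, Finset.sum_Ico_eq_sub _ h2]
  have e1 : ∀ N : ℕ, ∑ t ∈ Finset.range N, (u + v*(t:ℝ)) * (G*(A*(t:ℝ) - B))
      = (G*v*A)*((N:ℝ)*(N-1)*(2*N-1)/6) + (G*(u*A-v*B))*((N:ℝ)*(N-1)/2) + (-(G*u*B))*N := by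
    intro N
    rw [← sum_range_quad (G*v*A) (G*(u*A-v*B)) (-(G*u*B)) N]
    exact Finset.sum_congr rfl (fun t _ => by ring)
  rw [e1, e1]
  push_cast
  ring

lemma polyineq (k m : ℝ) (hk : 1 ≤ k) (hkm : k ≤ m) :
    k^3*((k+m)*(k+m+1)*(k+m+2)) ≤ 4*((k+1)*k*((m+1)*m)*(2*k*m+k+m+2)) := by
  have hm : 1 ≤ m := le_trans hk hkm
  have hk0 : (0:ℝ) < k := by linarith
  have hm0 : (0:ℝ) < m := by linarith
  have h1 : (k+m)*((k+m+1)*(k+m+2)) ≤ (2*m)*((2*m+1)*(2*m+2)) := by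
    have a2 : (k+m+1)*(k+m+2) ≤ (2*m+1)*(2*m+2) := by nlinarith
    exact mul_le_mul (by linarith) a2 (by nlinarith) (by linarith)
  have h2 : k^3*((k+m)*((k+m+1)*(k+m+2))) ≤ k^3*((2*m)*((2*m+1)*(2*m+2))) :=
    mul_le_mul_of_nonneg_left h1 (by positivity)
  have h3 : k^2*(2*m+1) ≤ (k+1)*(2*k+1)*m := by nlinarith
  have h4 : k^3*((2*m)*((2*m+1)*(2*m+2))) ≤ 4*((k+1)*k*((m+1)*m)*(m*(2*k+1))) := by
    nlinarith [mul_le_mul_of_nonneg_left h3 (show (0:ℝ) ≤ 4*k*m*(m+1) by positivity)]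
  have h5 : 4*((k+1)*k*((m+1)*m)*(m*(2*k+1))) ≤ 4*((k+1)*k*((m+1)*m)*(2*k*m+k+m+2)) := by
    have b1 : m*(2*k+1) ≤ 2*k*m+k+m+2 := by nlinarith
    nlinarith [mul_le_mul_of_nonneg_left b1 (show (0:ℝ) ≤ 4*((k+1)*k*((m+1)*m)) by positivity)]
  calc k^3*((k+m)*(k+m+1)*(k+m+2)) = k^3*((k+m)*((k+m+1)*(k+m+2))) := by ring
    _ ≤ k^3*((2*m)*((2*m+1)*(2*m+2))) := h2
    _ ≤ 4*((k+1)*k*((m+1)*m)*(m*(2*k+1))) := h4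
    _ ≤ 4*((k+1)*k*((m+1)*m)*(2*k*m+k+m+2)) := h5

lemma signal_lb (k m n δ fl Δ α β : ℝ)
    (hk : 1 ≤ k) (hm : 1 ≤ m) (hn : (3:ℝ)/2 ≤ n) (hδ : 0 < δ) (hfl : 0 < fl) (hΔfl : fl ≤ Δ)
    (hα2 : α^2 = 6/(((k+m)*(k+m+1)*(k+m+2))*(2*k*m+k+m+2)))
    (hα0 : 0 ≤ α)
    (hβ2 : β^2 = ((m+1)*m)/((k+1)*k)) (hβ0 : 0 < β)
    (hδk : δ ≤ 2*n*k) (hδm : δ ≤ 2*n*m) :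
    δ ^ ((3:ℝ)/2) * fl / (8*Real.sqrt (3*n^3)) ≤ Δ * (α/β * ((m+1)*m*(2*k*m+k+m+2)/6)) := by
  have hn0 : (0:ℝ) < n := by linarith
  have hk0 : (0:ℝ) < k := by linarith
  have hm0 : (0:ℝ) < m := by linarith
  have hQ0 : (0:ℝ) < 2*k*m+k+m+2 := by nlinarith
  have hD0 : (0:ℝ) < (k+m)*(k+m+1)*(k+m+2) := by positivity
  have hn3 : (0:ℝ) < n^3 := by positivity
  have hA0 : 0 ≤ α/β * ((m+1)*m*(2*k*m+k+m+2)/6) := by positivity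
  have hΔ0 : (0:ℝ) < Δ := lt_of_lt_of_le hfl hΔfl
  have hL0 : 0 ≤ δ ^ ((3:ℝ)/2) * fl / (8*Real.sqrt (3*n^3)) := by positivity
  have hδ32 : (δ ^ ((3:ℝ)/2))^2 = δ^3 := by
    rw [← Real.rpow_natCast (δ ^ ((3:ℝ)/2)) 2, ← Real.rpow_mul hδ.le]
    norm_num
  have h8 : (8*Real.sqrt (3*n^3))^2 = 192*n^3 := by
    rw [mul_pow, Real.sq_sqrt (by positivity)]; ring
  have hL2 : (δ ^ ((3:ℝ)/2) * fl / (8*Real.sqrt (3*n^3)))^2 = δ^3*fl^2/(192*n^3) := by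
    rw [div_pow, mul_pow, h8, hδ32]
  have hR2 : (Δ * (α/β * ((m+1)*m*(2*k*m+k+m+2)/6)))^2
      = Δ^2*(((k+1)*k*((m+1)*m)*(2*k*m+k+m+2))/(6*((k+m)*(k+m+1)*(k+m+2)))) := by
    have e : (Δ * (α/β * ((m+1)*m*(2*k*m+k+m+2)/6)))^2
        = Δ^2*(α^2/β^2*((m+1)*m*(2*k*m+k+m+2)/6)^2) := by ring
    rw [e, hα2, hβ2]
    field_simp
  have hfl2 : fl^2 ≤ Δ^2 := by nlinarith
  have core : δ^3*fl^2/(192*n^3)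
      ≤ Δ^2*(((k+1)*k*((m+1)*m)*(2*k*m+k+m+2))/(6*((k+m)*(k+m+1)*(k+m+2)))) := by
    rw [show Δ^2*(((k+1)*k*((m+1)*m)*(2*k*m+k+m+2))/(6*((k+m)*(k+m+1)*(k+m+2))))
        = (Δ^2*((k+1)*k*((m+1)*m)*(2*k*m+k+m+2)))/(6*((k+m)*(k+m+1)*(k+m+2))) by ring]
    rw [div_le_div_iff₀ (by positivity) (by positivity)]
    have h48 : (0:ℝ) ≤ 48*n^3*fl^2 := by positivity
    have h192 : (0:ℝ) ≤ 192*n^3*((k+1)*k*((m+1)*m)*(2*k*m+k+m+2)) := by positivity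
    rcases le_total k m with hkm | hmk
    · have hδ3 : δ^3 ≤ 8*n^3*k^3 := by
        calc δ^3 ≤ (2*n*k)^3 := pow_le_pow_left₀ hδ.le hδk 3
          _ = 8*n^3*k^3 := by ring
      have hpoly := polyineq k m hk hkm
      have e1 := mul_nonneg (mul_nonneg (sub_nonneg.mpr hδ3) (sq_nonneg fl))
        (le_of_lt (show (0:ℝ) < 6*((k+m)*(k+m+1)*(k+m+2)) by positivity))
      have e2 := mul_nonneg (sub_nonneg.mpr hpoly) h48
      have e3 := mul_nonneg (sub_nonneg.mpr hfl2) h192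
      linarith [e1, e2, e3]
    · have hδ3 : δ^3 ≤ 8*n^3*m^3 := by
        calc δ^3 ≤ (2*n*m)^3 := pow_le_pow_left₀ hδ.le hδm 3
          _ = 8*n^3*m^3 := by ring
      have hpoly : m^3*((k+m)*(k+m+1)*(k+m+2)) ≤ 4*((k+1)*k*((m+1)*m)*(2*k*m+k+m+2)) := by
        nlinarith [polyineq m k hm hmk]
      have e1 := mul_nonneg (mul_nonneg (sub_nonneg.mpr hδ3) (sq_nonneg fl))
        (le_of_lt (show (0:ℝ) < 6*((k+m)*(k+m+1)*(k+m+2)) by positivity))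
      have e2 := mul_nonneg (sub_nonneg.mpr hpoly) h48
      have e3 := mul_nonneg (sub_nonneg.mpr hfl2) h192
      linarith [e1, e2, e3]
  have hsq : (δ ^ ((3:ℝ)/2) * fl / (8*Real.sqrt (3*n^3)))^2
      ≤ (Δ * (α/β * ((m+1)*m*(2*k*m+k+m+2)/6)))^2 := by rw [hL2, hR2]; exact core
  have h := Real.sqrt_le_sqrt hsq
  rwa [Real.sqrt_sq hL0, Real.sqrt_sq (mul_nonneg hΔ0.le hA0)] at h

/-- lower bound on the maximal contrast value of the observed data over
`[s, e]`, when the interval contains a single kink whose distance to both end-points is at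
least `δ/(2n)`. -/
theorem statement13 (T s r e : ℕ) (hT : 2 ≤ T) (hs : 1 ≤ s) (hsr : s < r) (hre : r < e)
    (heT : e ≤ T) (f : ℕ → ℝ) (a₁ b₁ a₂ b₂ Δ : ℝ) (hslope : b₁ ≠ b₂)
    (hcont : a₁ + b₁ * r = a₂ + b₂ * r)
    (hf₁ : ∀ t, s ≤ t → t ≤ r → f t = a₁ + b₁ * t)
    (hf₂ : ∀ t, r ≤ t → t ≤ e → f t = a₂ + b₂ * t)
    (hΔ : Δ = |b₁ - b₂|)
    (n δ flow Cstar : ℝ) (hn : (3 : ℝ) / 2 ≤ n) (hδ : 0 < δ) (hflow : 0 < flow)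
    (hCstar : 0 < Cstar) (hΔflow : flow ≤ Δ)
    (hSNR : Cstar * Real.sqrt (Real.log T) ≤ δ ^ ((3 : ℝ) / 2) * flow)
    (hmin : δ / (2 * n) ≤ min ((r : ℝ) - s) ((e : ℝ) - r))
    (X : ℕ → ℝ)
    (hX : ∀ b, s < b → b < e →
      |innerT T (fun t => X t - f t) (phiC s b e)| ≤ Real.sqrt (8 * Real.log T)) :
    ∃ b, s < b ∧ b < e ∧
      (1 / (8 * Real.sqrt (3 * n ^ 3)) - 2 * Real.sqrt 2 / Cstar) * δ ^ ((3 : ℝ) / 2) * flow ≤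
        contrastC T s b e X := by
  have ha₂ : a₂ = a₁ + b₁*(r:ℝ) - b₂*(r:ℝ) := by linarith
  subst ha₂
  have hk1 : (1:ℝ) ≤ (r:ℝ) - s := by
    have : (s:ℝ) + 1 ≤ (r:ℝ) := by exact_mod_cast hsr
    linarith
  have hm1 : (1:ℝ) ≤ (e:ℝ) - r := by
    have : (r:ℝ) + 1 ≤ (e:ℝ) := by exact_mod_cast hre
    linarith
  have hn0 : (0:ℝ) < n := by linarith
  have hβ2 : (betaC s r e)^2 = (((e:ℝ)-r+1)*((e:ℝ)-r))/(((r:ℝ)-s+1)*((r:ℝ)-s)) := by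
    rw [betaC, Real.sq_sqrt]
    apply div_nonneg <;> apply mul_nonneg <;> linarith
  have hβpos : 0 < betaC s r e := by
    rw [betaC]
    apply Real.sqrt_pos.mpr
    apply div_pos <;> apply mul_pos <;> linarith
  have hβne : betaC s r e ≠ 0 := ne_of_gt hβpos
  -- closed form for the inner product of f with the contrast vector at b = r
  have hval : innerT T f (phiC s r e) = alphaC s r e / betaC s r e *
      ((b₁ - b₂) * (((e:ℝ)-r+1)*((e:ℝ)-r)*(2*((r:ℝ)-s)*((e:ℝ)-r)+((r:ℝ)-s)+((e:ℝ)-r)+2)/6)) := by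
    have step1 : innerT T f (phiC s r e) = ∑ t ∈ Finset.Icc s e, f t * phiC s r e t := by
      rw [innerT]
      refine (Finset.sum_subset ?_ ?_).symm
      · intro t ht
        simp only [Finset.mem_Icc] at *
        omega
      · intro t _ ht
        simp only [Finset.mem_Icc, not_and, not_le] at ht
        have : phiC s r e t = 0 := by
          rw [phiC, if_neg (by omega), if_neg (by omega)]
        rw [this, mul_zero]
    rw [step1]
    have step2 : ∑ t ∈ Finset.Icc s e, f t * phiC s r e t
        = ∑ t ∈ Finset.Icc s r, f t * phiC s r e t
          + ∑ t ∈ Finset.Icc (r+1) e, f t * phiC s r e t := by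
      rw [← Finset.Ico_add_one_right_eq_Icc s e,
          ← Finset.sum_Ico_consecutive _ (show s ≤ r+1 by omega) (show r+1 ≤ e+1 by omega),
          Finset.Ico_add_one_right_eq_Icc, Finset.Ico_add_one_right_eq_Icc]
    rw [step2]
    have step3 : ∑ t ∈ Finset.Icc s r, f t * phiC s r e t
        = ∑ t ∈ Finset.Icc s r, (a₁ + b₁*(t:ℝ)) *
            (alphaC s r e * betaC s r e *
              ((((e:ℝ) + 2*r - 3*s + 2)) * (t:ℝ) - ((r:ℝ)*e + (r:ℝ)*s - 2*(s:ℝ)^2 + 2*s))) := by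
      refine Finset.sum_congr rfl (fun t ht => ?_)
      simp only [Finset.mem_Icc] at ht
      rw [hf₁ t ht.1 ht.2, phiC, if_pos ht]
    have step4 : ∑ t ∈ Finset.Icc (r+1) e, f t * phiC s r e t
        = ∑ t ∈ Finset.Icc (r+1) e, ((a₁ + b₁*(r:ℝ) - b₂*(r:ℝ)) + b₂*(t:ℝ)) *
            ((-(alphaC s r e / betaC s r e)) *
              ((3*(e:ℝ) - 2*r - s + 2) * (t:ℝ) - (2*(e:ℝ)^2 + 2*e - (r:ℝ)*e - (r:ℝ)*s))) := by
      refine Finset.sum_congr rfl (fun t ht => ?_)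
      simp only [Finset.mem_Icc] at ht
      rw [hf₂ t (by omega) ht.2, phiC, if_neg (by omega), if_pos ⟨ht.1, ht.2⟩]
    rw [step3, step4, sum_affine_mul _ _ (le_of_lt hsr), sum_affine_mul _ _ (by omega : r+1 ≤ e)]
    have hG1 : alphaC s r e * betaC s r e
        = alphaC s r e / betaC s r e * ((((e:ℝ)-r+1)*((e:ℝ)-r))/(((r:ℝ)-s+1)*((r:ℝ)-s))) := by
      rw [← hβ2]
      field_simp
    rw [hG1]
    have h1 : ((r:ℝ)-s+1) ≠ 0 := by linarith
    have h2 : ((r:ℝ)-s) ≠ 0 := by linarith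
    push_cast
    field_simp
    ring
  -- α² identity
  have hDQ : (0:ℝ) < ((((r:ℝ)-s)+((e:ℝ)-r))*((((r:ℝ)-s)+((e:ℝ)-r))+1)*((((r:ℝ)-s)+((e:ℝ)-r))+2))
      *(2*((r:ℝ)-s)*((e:ℝ)-r)+((r:ℝ)-s)+((e:ℝ)-r)+2) := by
    have q0 : (0:ℝ) < 2*((r:ℝ)-s)*((e:ℝ)-r)+((r:ℝ)-s)+((e:ℝ)-r)+2 := by nlinarith
    have d0 : (0:ℝ) < (((r:ℝ)-s)+((e:ℝ)-r))*((((r:ℝ)-s)+((e:ℝ)-r))+1)*((((r:ℝ)-s)+((e:ℝ)-r))+2) := by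
      apply mul_pos
      apply mul_pos
      all_goals linarith
    exact mul_pos d0 q0
  have hα2 : (alphaC s r e)^2 = 6/(((((r:ℝ)-s)+((e:ℝ)-r))*((((r:ℝ)-s)+((e:ℝ)-r))+1)*((((r:ℝ)-s)+((e:ℝ)-r))+2))*(2*((r:ℝ)-s)*((e:ℝ)-r)+((r:ℝ)-s)+((e:ℝ)-r)+2)) := by
    rw [alphaC, show ((e:ℝ) - s + 1) * (((e:ℝ) - s + 1) ^ 2 - 1) *
        (1 + ((e:ℝ) - r + 1) * ((r:ℝ) - s + 1) + ((e:ℝ) - r) * ((r:ℝ) - s))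
        = ((((r:ℝ)-s)+((e:ℝ)-r))*((((r:ℝ)-s)+((e:ℝ)-r))+1)*((((r:ℝ)-s)+((e:ℝ)-r))+2))
          *(2*((r:ℝ)-s)*((e:ℝ)-r)+((r:ℝ)-s)+((e:ℝ)-r)+2) from by ring,
      Real.sq_sqrt (le_of_lt (div_pos (by norm_num) hDQ))]
  -- distances
  have h2n : (0:ℝ) < 2*n := by linarith
  have hδk : δ ≤ 2*n*((r:ℝ)-s) := by
    have h := le_trans hmin (min_le_left _ _)
    have := (div_le_iff₀ h2n).mp h
    nlinarith [this]
  have hδm : δ ≤ 2*n*((e:ℝ)-r) := by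
    have h := le_trans hmin (min_le_right _ _)
    have := (div_le_iff₀ h2n).mp h
    nlinarith [this]
  have hsig := signal_lb ((r:ℝ)-s) ((e:ℝ)-r) n δ flow Δ (alphaC s r e) (betaC s r e)
    hk1 hm1 hn hδ hflow hΔflow hα2 (Real.sqrt_nonneg _) hβ2 hβpos hδk hδm
  -- |⟨f,ϕ⟩| = Δ * A
  have hA0 : 0 ≤ alphaC s r e / betaC s r e *
      (((e:ℝ)-r+1)*((e:ℝ)-r)*(2*((r:ℝ)-s)*((e:ℝ)-r)+((r:ℝ)-s)+((e:ℝ)-r)+2)/6) := by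
    apply mul_nonneg (div_nonneg (Real.sqrt_nonneg _) hβpos.le)
    have q0 : (0:ℝ) < 2*((r:ℝ)-s)*((e:ℝ)-r)+((r:ℝ)-s)+((e:ℝ)-r)+2 := by nlinarith
    have : (0:ℝ) ≤ ((e:ℝ)-r+1)*((e:ℝ)-r) := mul_nonneg (by linarith) (by linarith)
    positivity
  have habs : |innerT T f (phiC s r e)| = Δ * (alphaC s r e / betaC s r e *
      (((e:ℝ)-r+1)*((e:ℝ)-r)*(2*((r:ℝ)-s)*((e:ℝ)-r)+((r:ℝ)-s)+((e:ℝ)-r)+2)/6)) := by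
    rw [hval, show alphaC s r e / betaC s r e *
        ((b₁ - b₂) * (((e:ℝ)-r+1)*((e:ℝ)-r)*(2*((r:ℝ)-s)*((e:ℝ)-r)+((r:ℝ)-s)+((e:ℝ)-r)+2)/6))
        = (b₁ - b₂) * (alphaC s r e / betaC s r e *
        (((e:ℝ)-r+1)*((e:ℝ)-r)*(2*((r:ℝ)-s)*((e:ℝ)-r)+((r:ℝ)-s)+((e:ℝ)-r)+2)/6)) from by ring,
      abs_mul, abs_of_nonneg hA0, ← hΔ]
  -- triangle inequality
  have hXr := hX r hsr hre
  have hlin : innerT T f (phiC s r e)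
      = innerT T X (phiC s r e) - innerT T (fun t => X t - f t) (phiC s r e) := by
    rw [innerT, innerT, innerT, ← Finset.sum_sub_distrib]
    exact Finset.sum_congr rfl fun t _ => by ring
  have htri : Δ * (alphaC s r e / betaC s r e *
      (((e:ℝ)-r+1)*((e:ℝ)-r)*(2*((r:ℝ)-s)*((e:ℝ)-r)+((r:ℝ)-s)+((e:ℝ)-r)+2)/6))
      ≤ |innerT T X (phiC s r e)| + Real.sqrt (8 * Real.log T) := by
    have t1 : Δ * (alphaC s r e / betaC s r e *
        (((e:ℝ)-r+1)*((e:ℝ)-r)*(2*((r:ℝ)-s)*((e:ℝ)-r)+((r:ℝ)-s)+((e:ℝ)-r)+2)/6))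
        = |innerT T X (phiC s r e) - innerT T (fun t => X t - f t) (phiC s r e)| := by
      rw [← hlin, habs]
    rw [t1, sub_eq_add_neg]
    calc |innerT T X (phiC s r e) + -(innerT T (fun t => X t - f t) (phiC s r e))|
        ≤ |innerT T X (phiC s r e)| + |-(innerT T (fun t => X t - f t) (phiC s r e))| :=
          abs_add_le _ _
      _ = |innerT T X (phiC s r e)| + |innerT T (fun t => X t - f t) (phiC s r e)| := by
          rw [abs_neg]
      _ ≤ |innerT T X (phiC s r e)| + Real.sqrt (8 * Real.log T) := by linarith [hXr]
  -- noise bound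
  have hlogT : 0 ≤ Real.log T := by
    apply Real.log_nonneg
    have : (2:ℝ) ≤ (T:ℝ) := by exact_mod_cast hT
    linarith
  have hsqrt8 : Real.sqrt 8 = 2 * Real.sqrt 2 := by
    rw [show (8:ℝ) = 2^2 * 2 by norm_num, Real.sqrt_mul (by positivity), Real.sqrt_sq (by norm_num)]
  have hnoise : Real.sqrt (8 * Real.log T) ≤ 2 * Real.sqrt 2 / Cstar * (δ ^ ((3:ℝ)/2) * flow) := by
    have hsl : Real.sqrt (Real.log T) ≤ δ ^ ((3:ℝ)/2) * flow / Cstar := by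
      rw [le_div_iff₀ hCstar]
      calc Real.sqrt (Real.log T) * Cstar = Cstar * Real.sqrt (Real.log T) := mul_comm _ _
        _ ≤ δ ^ ((3:ℝ)/2) * flow := hSNR
    calc Real.sqrt (8 * Real.log T) = Real.sqrt 8 * Real.sqrt (Real.log T) :=
          Real.sqrt_mul (by norm_num) _
      _ = 2 * Real.sqrt 2 * Real.sqrt (Real.log T) := by rw [hsqrt8]
      _ ≤ 2 * Real.sqrt 2 * (δ ^ ((3:ℝ)/2) * flow / Cstar) := by
          apply mul_le_mul_of_nonneg_left hsl (by positivity)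
      _ = 2 * Real.sqrt 2 / Cstar * (δ ^ ((3:ℝ)/2) * flow) := by ring
  refine ⟨r, hsr, hre, ?_⟩
  rw [contrastC]
  have htarget : (1 / (8 * Real.sqrt (3 * n ^ 3)) - 2 * Real.sqrt 2 / Cstar) * δ ^ ((3:ℝ)/2) * flow
      = δ ^ ((3:ℝ)/2) * flow / (8 * Real.sqrt (3 * n ^ 3))
        - 2 * Real.sqrt 2 / Cstar * (δ ^ ((3:ℝ)/2) * flow) := by ring
  rw [htarget]
  linarith [hsig, htri, hnoise]
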